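/- Polynomial functors between slices of a locally cartesian closed category are closed under coproducts: given a family of polynomials I ← A_k → B_k → J (k ∈ K, K a set), the coproduct of the induced polynomial functors is naturally isomorphic to the functor induced by the polynomial I ← ∐_k A_k → ∐_k B_k → J. -/

import Mathlib

open CategoryTheory

/-- The polynomial functor `Set/I ⥤ Set/J` (in indexed-family form) induced by a
polynomial `I ←s– A –f→ B –t→ J`. -/
@[simps]
def polyFunctor {I J A B : Type} (s : A → I) (f : A → B) (t : B → J) :
    (∀ _ : I, Type) ⥤ (∀ _ : J, Type) where
  obj X j := Σ b : { b : B // t b = j }, ∀ a : { a : A // f a = b.1 }, X (s a.1)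
  map {X Y} η j := TypeCat.ofHom (fun x => ⟨x.1, fun a => η (s a.1) (x.2 a)⟩)

/-- The pointwise coproduct of a `K`-indexed family of functors
`Set/I ⥤ Set/J`. -/
@[simps]
def coprodFunctor {I J K : Type} (F : K → ((∀ _ : I, Type) ⥤ (∀ _ : J, Type))) :
    (∀ _ : I, Type) ⥤ (∀ _ : J, Type) where
  obj X j := Σ k : K, (F k).obj X j
  map {X Y} η j := TypeCat.ofHom (fun x => ⟨x.1, (F x.1).map η j x.2⟩)

def bwdAux {I K : Type} {A B : K → Type} (s : ∀ k, A k → I) (f : ∀ k, A k → B k)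
    (X : I → Type) {k : K} {b : B k} (u : ∀ a : {a : A k // f k a = b}, X (s k a.1))
    (k' : K) (a' : A k') (ha : (⟨k', f k' a'⟩ : Σ k, B k) = ⟨k, b⟩) : X (s k' a') := by
  have h1 : k' = k := congrArg Sigma.fst ha
  subst h1
  exact u ⟨a', eq_of_heq (Sigma.mk.inj_iff.mp ha).2⟩

theorem bwdAux_eq {I K : Type} {A B : K → Type} (s : ∀ k, A k → I) (f : ∀ k, A k → B k)
    (X : I → Type) {k : K} {b : B k} (u : ∀ a : {a : A k // f k a = b}, X (s k a.1))
    (a' : A k) (h : f k a' = b) (ha : (⟨k, f k a'⟩ : Σ k, B k) = ⟨k, b⟩) :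
    bwdAux s f X u k a' ha = u ⟨a', h⟩ := by
  subst h; rfl

/-- polynomial functors are closed under coproducts: given a set
`K` and polynomials `I ← A_k → B_k → J`, the functor induced by the coproduct
polynomial `I ← ∐_k A_k → ∐_k B_k → J` is naturally isomorphic to the pointwise
coproduct of the induced polynomial functors. -/
theorem polyFunctor_coprod {I J K : Type} {A B : K → Type}
    (s : ∀ k, A k → I) (f : ∀ k, A k → B k) (t : ∀ k, B k → J) :
    Nonempty
      (polyFunctor (fun a : Σ k, A k => s a.1 a.2)
          (fun a : Σ k, A k => (⟨a.1, f a.1 a.2⟩ : Σ k, B k))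
          (fun b : Σ k, B k => t b.1 b.2) ≅
        coprodFunctor (fun k => polyFunctor (s k) (f k) (t k))) := by
  refine ⟨NatIso.ofComponents (fun X => ?_) ?_⟩
  · refine
      { hom := fun j => TypeCat.ofHom (fun x =>
          ⟨x.1.1.1, ⟨⟨x.1.1.2, x.1.2⟩, fun a =>
            x.2 ⟨⟨x.1.1.1, a.1⟩, congrArg (Sigma.mk x.1.1.1) a.2⟩⟩⟩)
        inv := fun j => TypeCat.ofHom (fun y =>
          ⟨⟨⟨y.1, y.2.1.1⟩, y.2.1.2⟩, fun a =>
            bwdAux s f X y.2.2 a.1.1 a.1.2 a.2⟩)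
        hom_inv_id := ?_
        inv_hom_id := ?_ }
    · funext j; ext x
      obtain ⟨⟨⟨k, b⟩, h⟩, w⟩ := x
      have e : ∀ a : {a : Σ k, A k // (⟨a.1, f a.1 a.2⟩ : Σ k, B k) = ⟨k, b⟩},
          bwdAux s f X
            (fun a0 : {a0 : A k // f k a0 = b} =>
              w ⟨⟨k, a0.1⟩, congrArg (Sigma.mk k) a0.2⟩) a.1.1 a.1.2 a.2 = w a := by
        rintro ⟨⟨k', a'⟩, ha⟩
        have h1 : k' = k := congrArg Sigma.fst ha
        subst h1
        have h2 : f k' a' = b := eq_of_heq (Sigma.mk.inj_iff.mp ha).2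
        subst h2
        exact bwdAux_eq s f X _ a' rfl _
      exact congrArg
        (fun w' => (⟨⟨⟨k, b⟩, h⟩, w'⟩ :
          (polyFunctor (fun a : Σ k, A k => s a.1 a.2)
            (fun a : Σ k, A k => (⟨a.1, f a.1 a.2⟩ : Σ k, B k))
            (fun b : Σ k, B k => t b.1 b.2)).obj X j)) (funext e)
    · funext j; ext y
      obtain ⟨k, ⟨⟨b, h⟩, u⟩⟩ := y
      have e : ∀ a : {a : A k // f k a = b},
          bwdAux s f X u k a.1 (congrArg (Sigma.mk k) a.2) = u a := by
        rintro ⟨a', ha⟩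
        subst ha
        exact bwdAux_eq s f X _ a' rfl _
      exact congrArg
        (fun u' => (⟨k, ⟨⟨b, h⟩, u'⟩⟩ :
          (coprodFunctor (fun k => polyFunctor (s k) (f k) (t k))).obj X j)) (funext e)
  · intro X Y η
    rfl
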